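/- The Batch Norm Jacobian annihilates the span of the input, the all-ones vector, and the output, and its range is orthogonal to that span: Fix N ≥ 1, c₁, c₀ ∈ ℝ, and in ℝ^N let 𝟙 be the all-ones vector, μ(f) = (1/N)Σ_i f_i, σ(f) = ‖f − μ(f)𝟙‖₂/√N, BN(f) = c₁(f − μ(f)𝟙)/σ(f) + c₀𝟙. Let f ∈ ℝ^N with σ(f) > 0 and let J be the Fréchet derivative of BN at f. Then: J f = 0, J 𝟙 = 0, J (BN(f)) = 0, and for every g ∈ ℝ^N, ⟨J g, f⟩ = 0 and ⟨J g, 𝟙⟩ = 0. -/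

import Mathlib

open Finset
open scoped RealInnerProductSpace

/-- The all-ones vector in `ℝ^N`. -/
noncomputable def ones (N : ℕ) : EuclideanSpace ℝ (Fin N) := WithLp.toLp 2 (fun _ => 1)

/-- Batch mean `μ(f) = (1/N) Σ_i f_i`. -/
noncomputable def bnMean (N : ℕ) (f : EuclideanSpace ℝ (Fin N)) : ℝ :=
  (∑ i, f i) / N

/-- Batch standard deviation `σ(f) = ‖f − μ(f)𝟙‖₂ / √N`. -/
noncomputable def bnSigma (N : ℕ) (f : EuclideanSpace ℝ (Fin N)) : ℝ :=
  ‖f - bnMean N f • ones N‖ / Real.sqrt N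

/-- The Batch Normalization map `BN(f) = c₁ (f − μ(f)𝟙)/σ(f) + c₀𝟙`. -/
noncomputable def BN (N : ℕ) (c₁ c₀ : ℝ) (f : EuclideanSpace ℝ (Fin N)) :
    EuclideanSpace ℝ (Fin N) :=
  c₁ • (bnSigma N f)⁻¹ • (f - bnMean N f • ones N) + c₀ • ones N

/-- The centering map `f ↦ f − μ(f)𝟙` as a continuous linear map. -/
noncomputable def Hmap (N : ℕ) :
    EuclideanSpace ℝ (Fin N) →L[ℝ] EuclideanSpace ℝ (Fin N) :=
  ContinuousLinearMap.id ℝ _ - (N : ℝ)⁻¹ • ((innerSL ℝ (ones N)).smulRight (ones N))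

lemma inner_ones (N : ℕ) (x : EuclideanSpace ℝ (Fin N)) : ⟪ones N, x⟫ = ∑ i, x i := by
  simp [PiLp.inner_apply, ones]

lemma inner_ones_ones (N : ℕ) : ⟪ones N, ones N⟫ = (N : ℝ) := by
  rw [inner_ones]; simp [ones]

lemma bnMean_eq (N : ℕ) (x : EuclideanSpace ℝ (Fin N)) :
    bnMean N x = (N : ℝ)⁻¹ * ⟪ones N, x⟫ := by
  rw [inner_ones, bnMean, div_eq_inv_mul]

lemma Hmap_apply (N : ℕ) (x : EuclideanSpace ℝ (Fin N)) :
    Hmap N x = x - bnMean N x • ones N := by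
  simp [Hmap, bnMean_eq, smul_smul]

lemma inner_ones' (N : ℕ) (x : EuclideanSpace ℝ (Fin N)) : ⟪x, ones N⟫ = ∑ i, x i := by
  rw [real_inner_comm, inner_ones]

lemma inner_Hmap_ones (N : ℕ) (hN : 1 ≤ N) (x : EuclideanSpace ℝ (Fin N)) :
    ⟪Hmap N x, ones N⟫ = 0 := by
  have hNne : (N : ℝ) ≠ 0 := Nat.cast_ne_zero.mpr (by omega)
  rw [Hmap_apply, inner_sub_left, real_inner_smul_left, inner_ones',
    inner_ones_ones, bnMean]
  field_simp
  ring

lemma Hmap_ones (N : ℕ) (hN : 1 ≤ N) : Hmap N (ones N) = 0 := by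
  have hNne : (N : ℝ) ≠ 0 := Nat.cast_ne_zero.mpr (by omega)
  rw [Hmap_apply]
  have : bnMean N (ones N) = 1 := by simp [bnMean, ones, hNne]
  rw [this, one_smul, sub_self]

/-- The Batch Norm Jacobian annihilates the span of the input `f`, the all-ones
vector `𝟙` and the output `BN(f)`, and its range is orthogonal to `f` and `𝟙`. -/
theorem bn_jacobian_annihilates (N : ℕ) (hN : 1 ≤ N) (c₁ c₀ : ℝ)
    (f : EuclideanSpace ℝ (Fin N)) (hσ : 0 < bnSigma N f)
    (J : EuclideanSpace ℝ (Fin N) →L[ℝ] EuclideanSpace ℝ (Fin N))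
    (hJ : J = fderiv ℝ (BN N c₁ c₀) f) :
    J f = 0 ∧ J (ones N) = 0 ∧ J (BN N c₁ c₀ f) = 0 ∧
      ∀ g : EuclideanSpace ℝ (Fin N), ⟪J g, f⟫ = 0 ∧ ⟪J g, ones N⟫ = 0 := by
  have hNpos : (0 : ℝ) < N := by exact_mod_cast Nat.lt_of_lt_of_le Nat.zero_lt_one hN
  have hrt : (0 : ℝ) < Real.sqrt N := Real.sqrt_pos.mpr hNpos
  set v : EuclideanSpace ℝ (Fin N) := Hmap N f with hv_def
  have hva : ‖v‖ = Real.sqrt N * bnSigma N f := by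
    rw [hv_def, Hmap_apply, bnSigma]
    field_simp
  have ha : 0 < ‖v‖ := hva ▸ mul_pos hrt hσ
  set a : ℝ := ‖v‖ with ha_def
  have hn_val : ⟪v, v⟫ = a ^ 2 := real_inner_self_eq_norm_sq v
  have ht : Real.sqrt ⟪v, v⟫ = a := by rw [hn_val, Real.sqrt_sq ha.le]
  set c : ℝ := c₁ * Real.sqrt N with hc_def
  -- derivative of x ↦ ⟪H x, H x⟫
  have hHd : HasFDerivAt (fun x => Hmap N x) (Hmap N) f := (Hmap N).hasFDerivAt
  have hn : HasFDerivAt (fun x => ⟪Hmap N x, Hmap N x⟫)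
      ((fderivInnerCLM ℝ (v, v)).comp ((Hmap N).prod (Hmap N))) f :=
    HasFDerivAt.inner ℝ hHd hHd
  -- derivative of t ↦ (√t)⁻¹ at ⟪v,v⟫
  have hs : HasDerivAt (fun t => (Real.sqrt t)⁻¹) (-(1 / (2 * a)) / a ^ 2) ⟪v, v⟫ := by
    have h1 := (Real.hasDerivAt_sqrt (show ⟪v, v⟫ ≠ 0 by rw [hn_val]; positivity)).inv
      (by rw [ht]; exact ha.ne')
    rwa [ht] at h1
  have hy := hs.comp_hasFDerivAt f hn
  have hy' : HasFDerivAt (fun x => (Real.sqrt ⟪Hmap N x, Hmap N x⟫)⁻¹)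
      ((-(1 / (2 * a)) / a ^ 2) • ((fderivInnerCLM ℝ (v, v)).comp ((Hmap N).prod (Hmap N)))) f :=
    hy
  have hc' := hy'.const_mul c
  have hF := (hc'.smul hHd).add_const (c₀ • ones N)
  have hBN_eq : BN N c₁ c₀ = fun x =>
      (c * (Real.sqrt ⟪Hmap N x, Hmap N x⟫)⁻¹) • Hmap N x + c₀ • ones N := by
    funext x
    have hsx : Real.sqrt ⟪Hmap N x, Hmap N x⟫ = ‖Hmap N x‖ := by
      rw [real_inner_self_eq_norm_sq, Real.sqrt_sq (norm_nonneg _)]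
    have hbs : bnSigma N x = ‖Hmap N x‖ / Real.sqrt N := by
      rw [bnSigma, Hmap_apply]
    rw [BN, hsx, hbs, ← Hmap_apply, smul_smul, inv_div]
    have : c₁ * (Real.sqrt N / ‖Hmap N x‖) = c * ‖Hmap N x‖⁻¹ := by
      rw [hc_def, div_eq_mul_inv]; ring
    rw [this]
  have hBN' : HasFDerivAt (BN N c₁ c₀) _ f := hBN_eq ▸ hF
  have hJD : J = _ := hJ.trans hBN'.fderiv
  have happ : ∀ g, J g = (c * a⁻¹) • Hmap N g
      + (c * ((-(1 / (2 * a)) / a ^ 2) * (⟪v, Hmap N g⟫ + ⟪Hmap N g, v⟫))) • v := by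
    intro g
    rw [hJD]
    rw [← hv_def]
    simp only [ContinuousLinearMap.add_apply, ContinuousLinearMap.coe_smul', Pi.smul_apply,
      ContinuousLinearMap.smulRight_apply, ContinuousLinearMap.smul_apply,
      ContinuousLinearMap.coe_comp', Function.comp_apply, ContinuousLinearMap.prod_apply,
      fderivInnerCLM_apply, smul_eq_mul, ht]
  have h1 : J (ones N) = 0 := by
    rw [happ, Hmap_ones N hN]
    simp
  have h0 : J f = 0 := by
    rw [happ, ← hv_def, real_inner_self_eq_norm_sq, ← ha_def, ← add_smul]
    have : c * a⁻¹ + c * (-(1 / (2 * a)) / a ^ 2 * (a ^ 2 + a ^ 2)) = 0 := by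
      field_simp
      ring
    rw [this, zero_smul]
  have hbn : J (BN N c₁ c₀ f) = 0 := by
    rw [BN, map_add, map_smul, map_smul, map_smul, map_sub, map_smul, h0, h1]
    simp
  refine ⟨h0, h1, hbn, fun g => ?_⟩
  have hones : ⟪J g, ones N⟫ = 0 := by
    rw [happ, inner_add_left, real_inner_smul_left, real_inner_smul_left,
      inner_Hmap_ones N hN, hv_def, inner_Hmap_ones N hN]
    ring
  refine ⟨?_, hones⟩
  have hfdec : f = v + bnMean N f • ones N := by
    rw [hv_def, Hmap_apply]; abel
  rw [hfdec, inner_add_right, real_inner_smul_right]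
  have hJgv : ⟪J g, v⟫ = 0 := by
    rw [happ, inner_add_left, real_inner_smul_left, real_inner_smul_left,
      real_inner_self_eq_norm_sq, ← ha_def, real_inner_comm v (Hmap N g)]
    have hane : a ≠ 0 := ha.ne'
    field_simp
    ring
  have hJgones : ⟪J g, ones N⟫ = 0 := hones
  rw [hJgv, hJgones, mul_zero, add_zero]
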